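/- Let v : Fin 5 → ℝ³ be five points in general position (every four of them affinely independent). Then at least one of the following holds: (i) there exists an index i such that v i lies in the interior of the convex hull of the other four points; or (ii) there exist two distinct indices i, j such that the open segment from v i to v j meets the intrinsic interior of the triangle formed as the convex hull of the remaining three points. -/

import Mathlib

open Finset Module

lemma sum_subtype_ne {M : Type*} [AddCommGroup M] (i : Fin 5) (f : Fin 5 → M) :
    ∑ j : {j : Fin 5 // j ≠ i}, f j = (∑ j, f j) - f i := by
  classical
  rw [← Finset.sum_subtype (Finset.univ.erase i)
    (fun j => by simp [Finset.mem_erase]) f]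
  rw [eq_sub_iff_add_eq, Finset.sum_erase_add _ _ (Finset.mem_univ i)]

lemma sum_subtype_ne_ne {M : Type*} [AddCommGroup M] (i j : Fin 5) (hij : i ≠ j)
    (f : Fin 5 → M) :
    ∑ k : {k : Fin 5 // k ≠ i ∧ k ≠ j}, f k = (∑ k, f k) - f i - f j := by
  classical
  rw [← Finset.sum_subtype ((Finset.univ.erase j).erase i)
    (fun k => by simp [Finset.mem_erase]; try tauto) f]
  rw [eq_sub_iff_add_eq, eq_sub_iff_add_eq, add_right_comm]
  rw [Finset.sum_erase_add _ _ (by simp [Finset.mem_erase, hij] : i ∈ Finset.univ.erase j)]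
  rw [Finset.sum_erase_add _ _ (Finset.mem_univ j)]

lemma card_ne_ne (i j : Fin 5) (hij : i ≠ j) :
    Fintype.card {k : Fin 5 // k ≠ i ∧ k ≠ j} = 3 := by
  classical
  rw [Fintype.card_subtype]
  have : (Finset.univ.filter (fun k : Fin 5 => k ≠ i ∧ k ≠ j))
      = (Finset.univ.erase j).erase i := by
    ext k; simp [Finset.mem_erase]; try tauto
  rw [this, Finset.card_erase_of_mem (by simp [Finset.mem_erase, hij]),
    Finset.card_erase_of_mem (Finset.mem_univ j)]
  simp

lemma card_ne (i : Fin 5) : Fintype.card {j : Fin 5 // j ≠ i} = 4 := by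
  classical
  rw [Fintype.card_subtype]
  have : (Finset.univ.filter (fun k : Fin 5 => k ≠ i)) = Finset.univ.erase i := by
    ext k; simp [Finset.mem_erase]
  rw [this, Finset.card_erase_of_mem (Finset.mem_univ i)]
  simp

lemma mem_interior_convexHull_of_pos {ι V : Type*} [Fintype ι]
    [NormedAddCommGroup V] [NormedSpace ℝ V] [FiniteDimensional ℝ V]
    {p : ι → V} (hp : AffineIndependent ℝ p)
    (htop : affineSpan ℝ (Set.range p) = ⊤)
    {w : ι → ℝ} (hw1 : ∑ i, w i = 1) (hpos : ∀ i, 0 < w i) :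
    ∑ i, w i • p i ∈ interior (convexHull ℝ (Set.range p)) := by
  classical
  let b : AffineBasis ι ℝ V := ⟨p, hp, htop⟩
  have hb : ⇑b = p := rfl
  have hcomb : Finset.univ.affineCombination ℝ p w = ∑ i, w i • p i :=
    Finset.affineCombination_eq_linear_combination _ _ _ hw1
  have : interior (convexHull ℝ (Set.range p)) = {x | ∀ i, 0 < b.coord i x} := by
    rw [← hb, b.interior_convexHull]
  rw [this]
  intro i
  have h := b.coord_apply_combination_of_mem (Finset.mem_univ i) hw1
  rw [hb, hcomb] at h
  rw [h]
  exact hpos i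

lemma mem_intrinsicInterior_convexHull_of_pos {ι V : Type*} [Fintype ι] [Nonempty ι]
    [NormedAddCommGroup V] [NormedSpace ℝ V] [FiniteDimensional ℝ V]
    {p : ι → V} (hp : AffineIndependent ℝ p)
    {w : ι → ℝ} (hw1 : ∑ i, w i = 1) (hpos : ∀ i, 0 < w i) :
    ∑ i, w i • p i ∈ intrinsicInterior ℝ (convexHull ℝ (Set.range p)) := by
  classical
  obtain ⟨i₀⟩ := ‹Nonempty ι›
  set p₀ : V := p i₀ with hp₀
  set D : Submodule ℝ V := (affineSpan ℝ (Set.range p)).direction with hD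
  have hmem : ∀ i, p i - p₀ ∈ D := fun i => by
    have h1 : p i ∈ affineSpan ℝ (Set.range p) := subset_affineSpan ℝ _ ⟨i, rfl⟩
    have h2 : p₀ ∈ affineSpan ℝ (Set.range p) := subset_affineSpan ℝ _ ⟨i₀, rfl⟩
    simpa using AffineSubspace.vsub_mem_direction h1 h2
  let q : ι → D := fun i => ⟨p i - p₀, hmem i⟩
  let φ : D →ᵃⁱ[ℝ] V :=
    ((AffineIsometryEquiv.constVAdd ℝ V p₀).toAffineIsometry).comp
      D.subtypeₗᵢ.toAffineIsometry
  have hφ : ∀ x : D, φ x = (x : V) + p₀ := fun x => by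
    simp [φ, vadd_eq_add, add_comm]
  have hφq : φ ∘ q = p := by
    funext i; simp [hφ, q]
  have hq : AffineIndependent ℝ q := AffineIndependent.of_comp φ.toAffineMap (by
    have : ⇑φ.toAffineMap ∘ q = p := hφq
    rw [this]; exact hp)
  have hcard : Fintype.card ι = Module.finrank ℝ D + 1 := by
    have hn : Fintype.card ι = (Fintype.card ι - 1) + 1 :=
      (Nat.succ_pred_eq_of_pos Fintype.card_pos).symm
    have hfr := hp.finrank_vectorSpan hn
    show Fintype.card ι = Module.finrank ℝ (affineSpan ℝ (Set.range p)).direction + 1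
    rw [direction_affineSpan, hfr]
    exact hn
  have htop : affineSpan ℝ (Set.range q) = ⊤ :=
    hq.affineSpan_eq_top_iff_card_eq_finrank_add_one.mpr hcard
  have hy : ∑ i, w i • q i ∈ interior (convexHull ℝ (Set.range q)) :=
    mem_interior_convexHull_of_pos hq htop hw1 hpos
  have hy' : ∑ i, w i • q i ∈ intrinsicInterior ℝ (convexHull ℝ (Set.range q)) :=
    interior_subset_intrinsicInterior hy
  have hconv : ⇑φ '' (convexHull ℝ) (Set.range q) = (convexHull ℝ) (Set.range p) := by
    rw [← φ.coe_toAffineMap, AffineMap.image_convexHull, ← Set.range_comp]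
    rw [φ.coe_toAffineMap, hφq]
  have himg := φ.image_intrinsicInterior (convexHull ℝ (Set.range q))
  rw [hconv] at himg
  rw [himg]
  refine ⟨∑ i, w i • q i, hy', ?_⟩
  have hcoe : ((∑ i, w i • q i : D) : V) = ∑ i, w i • (p i - p₀) := by
    simp [q]
  rw [hφ, hcoe]
  have hsum : ∑ i, w i • (p i - p₀) = (∑ i, w i • p i) - p₀ := by
    simp_rw [smul_sub]
    rw [Finset.sum_sub_distrib, ← Finset.sum_smul, hw1, one_smul]
  rw [hsum]
  abel

lemma K5_key (v : Fin 5 → EuclideanSpace ℝ (Fin 3))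
    (hgp : ∀ i : Fin 5, AffineIndependent ℝ (fun j : {j : Fin 5 // j ≠ i} => v j))
    (c : Fin 5 → ℝ) (hc0 : ∑ i, c i = 0) (hcv : ∑ i, c i • v i = 0)
    (hne : ∀ i, c i ≠ 0)
    (hcard : (Finset.univ.filter (fun i => 0 < c i)).card ≤ 2) :
    (∃ i : Fin 5, v i ∈ interior (convexHull ℝ (v '' {j | j ≠ i}))) ∨
    (∃ i j : Fin 5, i ≠ j ∧
      (openSegment ℝ (v i) (v j) ∩
        intrinsicInterior ℝ (convexHull ℝ (v '' {k | k ≠ i ∧ k ≠ j}))) ≠ ∅) := by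
  classical
  set P := Finset.univ.filter (fun i => 0 < c i) with hP
  have hPne : P.Nonempty := by
    rw [Finset.nonempty_iff_ne_empty]
    intro h
    have hneg : ∀ i, c i < 0 := fun i => by
      have : i ∉ P := by rw [h]; exact Finset.notMem_empty i
      have h2 : ¬ 0 < c i := by simpa [hP] using this
      exact lt_of_le_of_ne (not_lt.mp h2) (hne i)
    have : ∑ i, c i < 0 :=
      Finset.sum_neg (fun i _ => hneg i) Finset.univ_nonempty
    rw [hc0] at this
    exact lt_irrefl 0 this
  have hc12 : P.card = 1 ∨ P.card = 2 := by
    have := Finset.card_pos.mpr hPne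
    omega
  rcases hc12 with h1 | h2
  · -- one positive coefficient: v i inside tetrahedron
    obtain ⟨i, hPi⟩ := Finset.card_eq_one.mp h1
    have hci : 0 < c i := by
      have : i ∈ P := by rw [hPi]; exact Finset.mem_singleton_self i
      simpa [hP] using this
    have hneg : ∀ j : Fin 5, j ≠ i → c j < 0 := fun j hj => by
      have : j ∉ P := by rw [hPi]; simpa using hj
      have h2 : ¬ 0 < c j := by simpa [hP] using this
      exact lt_of_le_of_ne (not_lt.mp h2) (hne j)
    set w : {j : Fin 5 // j ≠ i} → ℝ := fun j => -c j / c i with hw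
    have hwpos : ∀ j, 0 < w j := fun j =>
      div_pos (neg_pos.mpr (hneg j j.2)) hci
    have hw1 : ∑ j, w j = 1 := by
      rw [hw, sum_subtype_ne i (fun j => -c j / c i), ← Finset.sum_div,
        Finset.sum_neg_distrib, hc0]
      field_simp
      ring
    have hx : ∑ j : {j : Fin 5 // j ≠ i}, w j • v j = v i := by
      have h1 : ∑ k, (-c k / c i) • v k = 0 := by
        have he : ∀ k : Fin 5, (-c k / c i) • v k = (-(c i)⁻¹) • (c k • v k) := fun k => by
          rw [smul_smul]; congr 1; ring
        rw [Finset.sum_congr rfl (fun k _ => he k), ← Finset.smul_sum, hcv, smul_zero]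
      rw [hw, sum_subtype_ne i (fun k => (-c k / c i) • v k), h1, zero_sub, ← neg_smul,
        neg_div, neg_neg, div_self hci.ne', one_smul]
    left
    refine ⟨i, ?_⟩
    have hp := hgp i
    have htop : affineSpan ℝ (Set.range (fun j : {j : Fin 5 // j ≠ i} => v j)) = ⊤ :=
      hp.affineSpan_eq_top_iff_card_eq_finrank_add_one.mpr
        (by rw [card_ne i, finrank_euclideanSpace_fin])
    have hmem := mem_interior_convexHull_of_pos hp htop hw1 hwpos
    rw [hx] at hmem
    rw [Set.image_eq_range]
    exact hmem
  · -- two positive coefficients: edge pierces triangle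
    obtain ⟨i, j, hij, hPij⟩ := Finset.card_eq_two.mp h2
    have hci : 0 < c i := by
      have : i ∈ P := by rw [hPij]; simp
      simpa [hP] using this
    have hcj : 0 < c j := by
      have : j ∈ P := by rw [hPij]; simp
      simpa [hP] using this
    have hneg : ∀ k : Fin 5, k ≠ i → k ≠ j → c k < 0 := fun k hki hkj => by
      have : k ∉ P := by rw [hPij]; simp [hki, hkj]
      have h2 : ¬ 0 < c k := by simpa [hP] using this
      exact lt_of_le_of_ne (not_lt.mp h2) (hne k)
    set S := c i + c j with hS
    have hSpos : 0 < S := by positivity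
    haveI : Nonempty {k : Fin 5 // k ≠ i ∧ k ≠ j} := by
      rw [← Fintype.card_pos_iff, card_ne_ne i j hij]; norm_num
    set w : {k : Fin 5 // k ≠ i ∧ k ≠ j} → ℝ := fun k => -c k / S with hw
    have hwpos : ∀ k, 0 < w k := fun k =>
      div_pos (neg_pos.mpr (hneg k k.2.1 k.2.2)) hSpos
    have hw1 : ∑ k, w k = 1 := by
      rw [hw, sum_subtype_ne_ne i j hij (fun k => -c k / S), ← Finset.sum_div,
        Finset.sum_neg_distrib, hc0]
      field_simp
      rw [hS]; ring
    have hx : ∑ k : {k : Fin 5 // k ≠ i ∧ k ≠ j}, w k • v k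
        = (c i / S) • v i + (c j / S) • v j := by
      have h1 : ∑ k, (-c k / S) • v k = 0 := by
        have he : ∀ k : Fin 5, (-c k / S) • v k = (-S⁻¹) • (c k • v k) := fun k => by
          rw [smul_smul]; congr 1; ring
        rw [Finset.sum_congr rfl (fun k _ => he k), ← Finset.smul_sum, hcv, smul_zero]
      rw [hw, sum_subtype_ne_ne i j hij (fun k => (-c k / S) • v k), h1]
      module
    have hseg : (c i / S) • v i + (c j / S) • v j ∈ openSegment ℝ (v i) (v j) :=
      ⟨c i / S, c j / S, div_pos hci hSpos, div_pos hcj hSpos, by field_simp; exact hS.symm, rfl⟩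
    have hp : AffineIndependent ℝ (fun k : {k : Fin 5 // k ≠ i ∧ k ≠ j} => v k) := by
      have := (hgp i).comp_embedding
        (⟨fun k : {k : Fin 5 // k ≠ i ∧ k ≠ j} => ⟨k.1, k.2.1⟩,
          by intro a b h; simpa [Subtype.ext_iff] using h⟩ :
          {k : Fin 5 // k ≠ i ∧ k ≠ j} ↪ {j' : Fin 5 // j' ≠ i})
      exact this
    have htri := mem_intrinsicInterior_convexHull_of_pos hp hw1 hwpos
    rw [hx] at htri
    right
    refine ⟨i, j, hij, ?_⟩
    apply Set.nonempty_iff_ne_empty.mp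
    refine ⟨(c i / S) • v i + (c j / S) • v j, hseg, ?_⟩
    rw [Set.image_eq_range]
    exact htri

/-- Classification of linear embeddings of K₅ in general position (existence part): for
five points of ℝ³ in general position, either some point lies inside the tetrahedron
spanned by the other four, or some open edge pierces the relative interior of the
triangle spanned by the remaining three points. -/
theorem K5_general_position_classification
    (v : Fin 5 → EuclideanSpace ℝ (Fin 3))
    (hgp : ∀ i : Fin 5, AffineIndependent ℝ (fun j : {j : Fin 5 // j ≠ i} => v j)) :
    (∃ i : Fin 5, v i ∈ interior (convexHull ℝ (v '' {j | j ≠ i}))) ∨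
    (∃ i j : Fin 5, i ≠ j ∧
      (openSegment ℝ (v i) (v j) ∩
        intrinsicInterior ℝ (convexHull ℝ (v '' {k | k ≠ i ∧ k ≠ j}))) ≠ ∅) := by
  classical
  have hnd : ¬ AffineIndependent ℝ v := by
    intro h
    have h4 := h.finrank_vectorSpan (by simp : Fintype.card (Fin 5) = 4 + 1)
    have hle := Submodule.finrank_le (vectorSpan ℝ (Set.range v))
    rw [h4, finrank_euclideanSpace_fin] at hle
    omega
  rw [affineIndependent_iff] at hnd
  push_neg at hnd
  obtain ⟨s, ww, hw0, hwv, i₀, hi₀s, hi₀⟩ := hnd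
  set c : Fin 5 → ℝ := fun i => if i ∈ s then ww i else 0 with hc
  have hc0 : ∑ i, c i = 0 := by
    rw [hc]
    simp only [Finset.sum_ite_mem, Finset.univ_inter]
    exact hw0
  have hcv : ∑ i, c i • v i = 0 := by
    rw [hc]
    simp only [ite_smul, zero_smul, Finset.sum_ite_mem, Finset.univ_inter]
    exact hwv
  have hne : ∀ i, c i ≠ 0 := by
    by_contra h
    push_neg at h
    obtain ⟨i₁, hzero⟩ := h
    have key := affineIndependent_iff.mp (hgp i₁) Finset.univ (fun j => c j)
      (by rw [sum_subtype_ne i₁ c, hc0, hzero, sub_zero])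
      (by rw [sum_subtype_ne i₁ (fun k => c k • v k), hcv, hzero, zero_smul, sub_zero])
    have hall : ∀ k : Fin 5, c k = 0 := fun k => by
      by_cases hk : k = i₁
      · rw [hk]; exact hzero
      · exact key ⟨k, hk⟩ (Finset.mem_univ _)
    have : c i₀ = ww i₀ := by rw [hc]; simp [hi₀s]
    exact hi₀ (this ▸ hall i₀)
  by_cases hc2 : (Finset.univ.filter (fun i => 0 < c i)).card ≤ 2
  · exact K5_key v hgp c hc0 hcv hne hc2
  · refine K5_key v hgp (fun i => -(c i)) (by rw [Finset.sum_neg_distrib, hc0, neg_zero])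
      (by simp only [neg_smul]; rw [Finset.sum_neg_distrib, hcv, neg_zero])
      (fun i => neg_ne_zero.mpr (hne i)) ?_
    have hsplit := Finset.card_filter_add_card_filter_not
      (s := (Finset.univ : Finset (Fin 5))) (p := fun i => 0 < c i)
    have heq : (Finset.univ.filter (fun i : Fin 5 => 0 < -(c i)))
        = Finset.univ.filter (fun i : Fin 5 => ¬ 0 < c i) := by
      ext k
      simp only [Finset.mem_filter, Finset.mem_univ, true_and, neg_pos]
      constructor
      · exact fun h => not_lt.mpr h.le
      · exact fun h => lt_of_le_of_ne (not_lt.mp h) (hne k)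
    rw [heq]
    have : (Finset.univ : Finset (Fin 5)).card = 5 := by simp
    omega
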